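/- For 0<z<1 and 0<α<1, with Y=(1-√(1-z))/(2√(1-z)), q(x)=(1-e^{-x})·((Y+1)e^{x}-Y), and x₀ = log((1+√(1-(1-α²)z))/((1-α)(1+√(1-z)))), one has q(x₀) - α²·q''(x₀) = α·√(1-(1-α²)z) / √(1-z). -/

import Mathlib

theorem stmt_5 (α z : ℝ) (hα : 0 < α) (hα1 : α < 1) (hz : 0 < z) (hz1 : z < 1) :
    let Y := (1 - Real.sqrt (1 - z)) / (2 * Real.sqrt (1 - z))
    let q := fun x : ℝ => (1 - Real.exp (-x)) * ((Y + 1) * Real.exp x - Y)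
    let x₀ := Real.log ((1 + Real.sqrt (1 - (1 - α ^ 2) * z))
        / ((1 - α) * (1 + Real.sqrt (1 - z))))
    q x₀ - α ^ 2 * deriv (deriv q) x₀
      = α * Real.sqrt (1 - (1 - α ^ 2) * z) / Real.sqrt (1 - z) := by
  intro Y q x₀
  set s := Real.sqrt (1 - z) with hsdef
  set t := Real.sqrt (1 - (1 - α ^ 2) * z) with htdef
  have hs : 0 < s := Real.sqrt_pos.2 (by linarith)
  have htpos0 : 0 < 1 - (1 - α ^ 2) * z := by nlinarith
  have ht : 0 < t := Real.sqrt_pos.2 htpos0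
  have hs2 : s ^ 2 = 1 - z := Real.sq_sqrt (by linarith)
  have ht2 : t ^ 2 = 1 - (1 - α ^ 2) * z := Real.sq_sqrt (le_of_lt htpos0)
  have hq : q = fun x => (Y + 1) * Real.exp x + Y * Real.exp (-x) - (2 * Y + 1) := by
    funext x
    have hxx : Real.exp (-x) * Real.exp x = 1 := by
      rw [← Real.exp_add]; simp
    simp only [q]
    linear_combination (-(Y+1)) * hxx
  have hderiv : ∀ x : ℝ, HasDerivAt q ((Y + 1) * Real.exp x - Y * Real.exp (-x)) x := by
    intro x
    rw [hq]
    have h2 : HasDerivAt (fun y : ℝ => Real.exp (-y)) (-Real.exp (-x)) x := by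
      simpa [Function.comp_def] using (Real.hasDerivAt_exp (-x)).comp x (hasDerivAt_neg x)
    have := (((Real.hasDerivAt_exp x).const_mul (Y + 1)).add (h2.const_mul Y)).sub_const
      (2 * Y + 1)
    exact this.congr_deriv (by ring)
  have hd1 : deriv q = fun x => (Y + 1) * Real.exp x - Y * Real.exp (-x) := by
    funext x; exact (hderiv x).deriv
  have hd2 : deriv (deriv q) x₀ = (Y + 1) * Real.exp x₀ + Y * Real.exp (-x₀) := by
    rw [hd1]
    have h2 : HasDerivAt (fun y : ℝ => Real.exp (-y)) (-Real.exp (-x₀)) x₀ := by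
      simpa [Function.comp_def] using (Real.hasDerivAt_exp (-x₀)).comp x₀ (hasDerivAt_neg x₀)
    have := ((Real.hasDerivAt_exp x₀).const_mul (Y + 1)).sub (h2.const_mul Y)
    have h' : HasDerivAt (fun x => (Y + 1) * Real.exp x - Y * Real.exp (-x))
        ((Y + 1) * Real.exp x₀ + Y * Real.exp (-x₀)) x₀ := by
      exact this.congr_deriv (by ring)
    exact h'.deriv
  have hargpos : 0 < (1 + t) / ((1 - α) * (1 + s)) := div_pos (by linarith) (mul_pos (by linarith) (by linarith))
  have hE : Real.exp x₀ = (1 + t) / ((1 - α) * (1 + s)) := Real.exp_log hargpos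
  have hEn : Real.exp (-x₀) = ((1 - α) * (1 + s)) / (1 + t) := by
    rw [Real.exp_neg, hE]
    field_simp
  rw [hd2]
  simp only [q, Y, hE, hEn]
  have h1 : (1:ℝ) + s ≠ 0 := by positivity
  have h2 : (1:ℝ) + t ≠ 0 := by positivity
  have h3 : (1:ℝ) - α ≠ 0 := by linarith
  simp only [← hsdef]
  have hrel : t ^ 2 = α ^ 2 + (1 - α ^ 2) * s ^ 2 := by
    linear_combination ht2 - (1 - α ^ 2) * hs2
  field_simp
  linear_combination ((1 - α ^ 2) * (1 + s) - 2 * α * (1 - α) * (1 + s)) * hrel
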